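/- Let X be a locally compact Hausdorff space, Δ ⊆ X an open subset, φ : Δ → X a continuous proper map, D a C*-algebra, and for each x ∈ Δ let α_x : D → D be a *-homomorphism such that for every d ∈ D the map Δ ∋ x ↦ α_x(d) ∈ D is continuous. Then for every a ∈ C₀(X, D) the function X → D sending x to α_x(a(φ(x))) for x ∈ Δ and to 0 for x ∉ Δ is continuous and vanishes at infinity, and the resulting map α : C₀(X, D) → C₀(X, D) is a *-homomorphism; it is the unique *-homomorphism of C₀(X, D) satisfying α(a)(x) = α_x(a(φ(x))) for all a ∈ C₀(X, D) and x ∈ Δ and α(a)(x) = 0 for x ∉ Δ. -/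

import Mathlib

open scoped ZeroAtInfty Classical

open Filter Topology

set_option maxHeartbeats 1000000

section Aux

variable {X : Type*} [TopologicalSpace X] [LocallyCompactSpace X] [T2Space X]
    {D : Type*} [NonUnitalNormedRing D] [StarRing D] [CStarRing D]
    [NormedSpace ℂ D] [IsScalarTower ℂ D D] [SMulCommClass ℂ D D] [StarModule ℂ D]
    [CompleteSpace D]

/-- The ambient C*-algebra structure bundled. -/
noncomputable local instance : NonUnitalCStarAlgebra D := { }

/-- Star homs are contractive. -/
lemma stmt7_aux_norm (ψ : D →⋆ₙₐ[ℂ] D) (d : D) : ‖ψ d‖ ≤ ‖d‖ :=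
  NonUnitalStarAlgHom.norm_apply_le _ _

/-- Equicontinuous family of contractions applied to a continuous function is continuous. -/
lemma stmt7_aux_cont {Δ : Set X} (T : Δ → (D →⋆ₙₐ[ℂ] D))
    (hT : ∀ d : D, Continuous fun x : Δ => T x d)
    {g : Δ → D} (hg : Continuous g) : Continuous fun x : Δ => T x (g x) := by
  rw [continuous_iff_continuousAt]
  intro x₀
  rw [ContinuousAt, tendsto_iff_norm_sub_tendsto_zero]
  have hb : ∀ x : Δ, ‖T x (g x) - T x₀ (g x₀)‖ ≤
      ‖g x - g x₀‖ + ‖T x (g x₀) - T x₀ (g x₀)‖ := by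
    intro x
    have : T x (g x) - T x₀ (g x₀) = T x (g x - g x₀) + (T x (g x₀) - T x₀ (g x₀)) := by
      rw [map_sub]; abel
    rw [this]
    refine (norm_add_le _ _).trans (add_le_add ?_ le_rfl)
    exact stmt7_aux_norm _ _
  refine squeeze_zero (fun x => norm_nonneg _) hb ?_
  have h1 : Tendsto (fun x : Δ => ‖g x - g x₀‖) (𝓝 x₀) (𝓝 0) := by
    rw [← tendsto_iff_norm_sub_tendsto_zero]
    exact hg.continuousAt
  have h2 : Tendsto (fun x : Δ => ‖T x (g x₀) - T x₀ (g x₀)‖) (𝓝 x₀) (𝓝 0) := by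
    rw [← tendsto_iff_norm_sub_tendsto_zero]
    exact (hT (g x₀)).continuousAt
  simpa using h1.add h2

end Aux

/-- Given an open set `Δ ⊆ X`, a continuous proper map `φ : Δ → X` and a
continuous bundle of *-homomorphisms `α_x : D → D` (`x ∈ Δ`), the formula
`α(a)(x) = α_x(a(φ x))` for `x ∈ Δ`, `α(a)(x) = 0` otherwise, gives a well-defined element
of `C₀(X, D)` for every `a ∈ C₀(X, D)`, and determines a unique *-homomorphism of
`C₀(X, D)`. -/
theorem stmt7 {X : Type*} [TopologicalSpace X] [LocallyCompactSpace X] [T2Space X]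
    {D : Type*} [NonUnitalNormedRing D] [StarRing D] [CStarRing D]
    [NormedSpace ℂ D] [IsScalarTower ℂ D D] [SMulCommClass ℂ D D] [StarModule ℂ D]
    [CompleteSpace D]
    (Δ : Set X) (hΔ : IsOpen Δ) (φ : Δ → X) (hφc : Continuous φ)
    (hφp : ∀ K : Set X, IsCompact K → IsCompact (φ ⁻¹' K))
    (T : Δ → (D →⋆ₙₐ[ℂ] D)) (hT : ∀ d : D, Continuous fun x : Δ => T x d) :
    -- for every `a ∈ C₀(X, D)` the pointwise formula defines an element of `C₀(X, D)`,
    -- i.e. a continuous function vanishing at infinity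
    (∀ a : C₀(X, D), ∃ F : C₀(X, D), ∀ x : X,
      F x = if h : x ∈ Δ then T ⟨x, h⟩ (a (φ ⟨x, h⟩)) else 0) ∧
    -- and there is a unique *-homomorphism `α` of `C₀(X, D)` realizing this formula
    (∃! α : C₀(X, D) →⋆ₙₐ[ℂ] C₀(X, D), ∀ (a : C₀(X, D)) (x : X),
      α a x = if h : x ∈ Δ then T ⟨x, h⟩ (a (φ ⟨x, h⟩)) else 0) := by
  classical
  -- the pointwise formula
  set f : C₀(X, D) → X → D :=
    fun a x => if h : x ∈ Δ then T ⟨x, h⟩ (a (φ ⟨x, h⟩)) else 0 with hf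
  -- the norm bound
  have hnorm : ∀ (a : C₀(X, D)) (x : X) (h : x ∈ Δ), ‖f a x‖ ≤ ‖a (φ ⟨x, h⟩)‖ := by
    intro a x h
    simp only [hf, dif_pos h]
    exact stmt7_aux_norm _ _
  -- for every ε > 0, outside a compact subset of Δ the function is < ε in norm
  have key : ∀ (a : C₀(X, D)), ∀ ε > (0 : ℝ), ∃ L : Set X, IsCompact L ∧ L ⊆ Δ ∧
      ∀ x ∉ L, ‖f a x‖ < ε := by
    intro a ε hε
    have hz := ZeroAtInftyContinuousMapClass.zero_at_infty a
    rw [Metric.tendsto_nhds] at hz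
    obtain ⟨K, hK, hKs⟩ := mem_cocompact.mp (hz ε hε)
    refine ⟨Subtype.val '' (φ ⁻¹' K), (hφp K hK).image continuous_subtype_val,
      ?_, ?_⟩
    · rintro x ⟨y, -, rfl⟩; exact y.2
    · intro x hx
      by_cases h : x ∈ Δ
      · have hφx : φ ⟨x, h⟩ ∉ K := by
          intro hmem
          exact hx ⟨⟨x, h⟩, hmem, rfl⟩
        have := hKs hφx
        simp only [Set.mem_setOf_eq, dist_zero_right] at this
        exact lt_of_le_of_lt (hnorm a x h) this
      · simp only [hf, dif_neg h, norm_zero]; exact hε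
  -- continuity
  have hcont : ∀ a : C₀(X, D), Continuous (f a) := by
    intro a
    rw [continuous_iff_continuousAt]
    intro x₀
    by_cases h₀ : x₀ ∈ Δ
    · -- on the open set Δ, f a agrees with a continuous function
      have hres : Continuous (Δ.restrict (f a)) := by
        have : Δ.restrict (f a) = fun x : Δ => T x (a (φ x)) := by
          funext x
          simp only [Set.restrict, Set.domRestrict, hf, dif_pos x.2]
        rw [this]
        exact stmt7_aux_cont T hT (a.continuous.comp hφc)
      exact (continuousOn_iff_continuous_restrict.mpr hres).continuousAt (hΔ.mem_nhds h₀)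
    · -- at points outside Δ, f a tends to 0
      have h0 : f a x₀ = 0 := dif_neg h₀
      rw [ContinuousAt, h0, Metric.tendsto_nhds]
      intro ε hε
      obtain ⟨L, hLc, hLΔ, hL⟩ := key a ε hε
      have hx₀ : x₀ ∈ Lᶜ := fun hc => h₀ (hLΔ hc)
      filter_upwards [hLc.isClosed.isOpen_compl.mem_nhds hx₀] with x hx
      rw [dist_zero_right]
      exact hL x hx
  -- vanishing at infinity
  have hzero : ∀ a : C₀(X, D), Tendsto (f a) (cocompact X) (𝓝 0) := by
    intro a
    rw [Metric.tendsto_nhds]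
    intro ε hε
    obtain ⟨L, hLc, -, hL⟩ := key a ε hε
    refine mem_of_superset (mem_cocompact.mpr ⟨L, hLc, subset_rfl⟩) ?_
    intro x hx
    rw [Set.mem_setOf_eq, dist_zero_right]
    exact hL x hx
  -- bundle as an element of C₀(X, D)
  let F : C₀(X, D) → C₀(X, D) := fun a =>
    { toFun := f a
      continuous_toFun := hcont a
      zero_at_infty' := hzero a }
  have hFapp : ∀ (a : C₀(X, D)) (x : X), F a x = f a x := fun _ _ => rfl
  constructor
  · exact fun a => ⟨F a, fun x => rfl⟩
  · refine ⟨{ toFun := F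
              map_smul' := ?_
              map_zero' := ?_
              map_add' := ?_
              map_mul' := ?_
              map_star' := ?_ }, fun a x => rfl, ?_⟩
    · intro c a
      ext x
      simp only [hFapp, hf, ZeroAtInftyContinuousMap.coe_smul, Pi.smul_apply]
      by_cases h : x ∈ Δ
      · simp [dif_pos h, map_smul]
      · simp [dif_neg h]
    · ext x
      simp only [hFapp, hf, ZeroAtInftyContinuousMap.coe_zero, Pi.zero_apply]
      by_cases h : x ∈ Δ
      · simp [dif_pos h]
      · simp [dif_neg h]
    · intro a b
      ext x
      simp only [hFapp, hf, ZeroAtInftyContinuousMap.coe_add, Pi.add_apply]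
      by_cases h : x ∈ Δ
      · simp [dif_pos h, map_add]
      · simp [dif_neg h]
    · intro a b
      ext x
      simp only [hFapp, hf, ZeroAtInftyContinuousMap.coe_mul, Pi.mul_apply]
      by_cases h : x ∈ Δ
      · simp [dif_pos h, map_mul]
      · simp [dif_neg h]
    · intro a
      ext x
      simp only [hFapp, hf, ZeroAtInftyContinuousMap.coe_star, Pi.star_apply]
      by_cases h : x ∈ Δ
      · simp [dif_pos h, map_star]
      · simp [dif_neg h]
    · intro β hβ
      refine DFunLike.ext _ _ fun a => DFunLike.ext _ _ fun x => ?_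
      rw [hβ a x]
      rfl
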